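/- Let n be a prime with n ≡ ±1 (mod 8) and let C_1 be the binary quadratic residue code of length n with non-zeroes the quadratic residues T_1. Then dim C_1 = (n-1)/2 and d(C_1)² ≥ n (the square-root bound). -/

import Mathlib

set_option linter.unusedSectionVars false

def cEval {n : ℕ} [NeZero n] {K E : Type*} [CommRing K] [CommRing E]
    (f : K →+* E) (α : E) (c : ZMod n → K) (j : ZMod n) : E :=
  ∑ i : ZMod n, f (c i) * α ^ (i * j).val

def nonzeroes {n : ℕ} [NeZero n] {K E : Type*} [CommRing K] [CommRing E]
    (f : K →+* E) (α : E) (C : Set (ZMod n → K)) : Set (ZMod n) :=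
  {j | ∃ c ∈ C, cEval f α c j ≠ 0}

def IsShiftClosed {n : ℕ} {K : Type*} [CommRing K] (C : Set (ZMod n → K)) : Prop :=
  ∀ c ∈ C, (fun i => c (i - 1)) ∈ C

noncomputable def minDist {ι K : Type*} [Fintype ι] [DecidableEq K] [Zero K]
    (C : Set (ι → K)) : ℕ :=
  sInf {d | ∃ c ∈ C, c ≠ 0 ∧ hammingNorm c = d}

namespace Stmt19
open Polynomial Finset

variable {n : ℕ} [NeZero n] {E : Type*} [Field E]

noncomputable def ee (α : E) (x : ZMod n) : E := α ^ x.val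

lemma pow_mod {α : E} (h1 : α ^ n = 1) (a : ℕ) : α ^ (a % n) = α ^ a := by
  conv_rhs => rw [← Nat.mod_add_div a n, pow_add, pow_mul, h1, one_pow, mul_one]

lemma ee_add {α : E} (h1 : α ^ n = 1) (x y : ZMod n) :
    ee α (x + y) = ee α x * ee α y := by
  rw [ee, ZMod.val_add, pow_mod h1, pow_add]; rfl

lemma ee_zero (α : E) : ee (n := n) α 0 = 1 := by
  rw [ee, ZMod.val_zero, pow_zero]

lemma alpha_ne_zero {α : E} (h1 : α ^ n = 1) : α ≠ 0 := by
  intro h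
  rw [h, zero_pow (NeZero.ne n)] at h1
  exact zero_ne_one h1

lemma ee_ne_zero {α : E} (h1 : α ^ n = 1) (x : ZMod n) : ee α x ≠ 0 :=
  pow_ne_zero _ (alpha_ne_zero h1)

lemma ee_mul_pow {α : E} (h1 : α ^ n = 1) (x y : ZMod n) :
    ee α (x * y) = (ee α y) ^ x.val := by
  rw [ee, ee, ZMod.val_mul, pow_mod h1, pow_mul, ← pow_mul, Nat.mul_comm, pow_mul]

lemma two_eq_zero (f : ZMod 2 →+* E) : (2 : E) = 0 := by
  have h : ((2 : ℕ) : E) = f ((2 : ℕ) : ZMod 2) := (map_natCast f 2).symm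
  have h2 : ((2 : ℕ) : ZMod 2) = 0 := by decide
  rw [h2, map_zero] at h
  simpa using h

lemma n_one (f : ZMod 2 →+* E) (hodd : n % 2 = 1) : ((n : ℕ) : E) = 1 := by
  have h2 : (2 : E) = 0 := two_eq_zero f
  conv_lhs => rw [← Nat.div_add_mod n 2, hodd]
  push_cast
  rw [h2]; ring

lemma f_zero_iff (f : ZMod 2 →+* E) (x : ZMod 2) : f x = 0 ↔ x = 0 := by
  constructor
  · intro h
    rcases (by decide : ∀ y : ZMod 2, y = 0 ∨ y = 1) x with rfl | rfl
    · rfl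
    · rw [map_one] at h
      exact absurd h one_ne_zero
  · rintro rfl; exact map_zero f

lemma sum_ee_univ (α : E) : ∑ m : ZMod n, ee α m = ∑ j ∈ range n, α ^ j := by
  refine Finset.sum_nbij' (fun m => m.val) (fun j => (j : ZMod n)) ?_ ?_ ?_ ?_ ?_
  · intro a _; exact mem_range.2 (ZMod.val_lt a)
  · intro a _; exact mem_univ _
  · intro a _; simp [ZMod.natCast_val, ZMod.cast_id]
  · intro a ha; exact ZMod.val_natCast_of_lt (mem_range.1 ha)
  · intro a _; rfl

lemma sum_ee (hp : n.Prime) {α : E} (hα : IsPrimitiveRoot α n) (hn1 : ((n : ℕ) : E) = 1)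
    (r : ZMod n) :
    ∑ m : ZMod n, ee α (r * m) = if r = 0 then 1 else 0 := by
  haveI : Fact (n.Prime) := ⟨hp⟩
  split_ifs with hr
  · subst hr
    simp only [zero_mul]
    rw [Finset.sum_const, ee_zero, nsmul_eq_mul, mul_one]
    simpa [ZMod.card] using hn1
  · have hbij : ∑ m : ZMod n, ee α (r * m) = ∑ m : ZMod n, ee α m :=
      Fintype.sum_bijective (fun m => r * m) (Equiv.mulLeft₀ r hr).bijective _ _ (fun m => rfl)
    rw [hbij, sum_ee_univ]
    have hne : α - 1 ≠ 0 := by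
      rw [sub_ne_zero]
      exact hα.ne_one hp.one_lt
    have hgeom := geom_sum_mul α n
    rw [hα.pow_eq_one, sub_self] at hgeom
    exact (mul_eq_zero.1 hgeom).resolve_right hne


section transform
variable {n : ℕ} [NeZero n] {E : Type*} [Field E]

lemma cEval_eq (f : ZMod 2 →+* E) (α : E) (c : ZMod n → ZMod 2) (j : ZMod n) :
    cEval f α c j = ∑ i : ZMod n, f (c i) * ee α (i * j) := rfl

lemma inv_formula (hp : n.Prime) (f : ZMod 2 →+* E) {α : E} (hα : IsPrimitiveRoot α n)
    (hn1 : ((n : ℕ) : E) = 1) (c : ZMod n → ZMod 2) (t : ZMod n) :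
    ∑ m : ZMod n, cEval f α c m * ee α (-(t * m)) = f (c t) := by
  have h1 : α ^ n = 1 := hα.pow_eq_one
  have key : ∀ m : ZMod n, cEval f α c m * ee α (-(t * m))
      = ∑ i : ZMod n, f (c i) * ee α ((i - t) * m) := by
    intro m
    rw [cEval_eq, Finset.sum_mul]
    refine Finset.sum_congr rfl (fun i _ => ?_)
    rw [mul_assoc, ← ee_add h1]
    congr 2
    ring
  rw [Finset.sum_congr rfl (fun m _ => key m), Finset.sum_comm]
  have : ∀ i : ZMod n, ∑ m : ZMod n, f (c i) * ee α ((i - t) * m)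
      = f (c i) * (if i - t = 0 then 1 else 0) := by
    intro i
    rw [← Finset.mul_sum, sum_ee hp hα hn1]
  rw [Finset.sum_congr rfl (fun i _ => this i)]
  have h2 : ∀ i : ZMod n, (f (c i) * if i - t = 0 then 1 else 0)
      = if i = t then f (c i) else 0 := by
    intro i
    by_cases h : i = t <;> simp [h, sub_eq_zero]
  rw [Finset.sum_congr rfl (fun i _ => h2 i), Finset.sum_ite_eq' Finset.univ t]
  simp

end transform

section dist
variable {n : ℕ} [NeZero n] {E : Type*} [Field E]

lemma sq_mem_T1 {T1 : Set (ZMod n)} (hT1 : T1 = {x : ZMod n | ∃ a : ZMod n, a ≠ 0 ∧ x = a ^ 2})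
    {a : ZMod n} (ha : a ≠ 0) : a ^ 2 ∈ T1 := by
  rw [hT1]; exact ⟨a, ha, rfl⟩

lemma T1_ne_zero (hp : n.Prime) {T1 : Set (ZMod n)}
    (hT1 : T1 = {x : ZMod n | ∃ a : ZMod n, a ≠ 0 ∧ x = a ^ 2})
    {x : ZMod n} (hx : x ∈ T1) : x ≠ 0 := by
  haveI : Fact (n.Prime) := ⟨hp⟩
  rw [hT1] at hx
  obtain ⟨a, ha, rfl⟩ := hx
  exact pow_ne_zero 2 ha

lemma zero_not_T1 (hp : n.Prime) {T1 : Set (ZMod n)}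
    (hT1 : T1 = {x : ZMod n | ∃ a : ZMod n, a ≠ 0 ∧ x = a ^ 2}) : (0 : ZMod n) ∉ T1 :=
  fun h => (T1_ne_zero hp hT1 h) rfl

lemma one_mem_T1 (hp : n.Prime) {T1 : Set (ZMod n)}
    (hT1 : T1 = {x : ZMod n | ∃ a : ZMod n, a ≠ 0 ∧ x = a ^ 2}) : (1 : ZMod n) ∈ T1 := by
  haveI : Fact (n.Prime) := ⟨hp⟩
  rw [hT1]
  exact ⟨1, one_ne_zero, (one_pow 2).symm⟩

/-- if `m ∈ T1` and `t ≠ 0` then `m * t^2 ∈ T1` would force ... helper: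
`m ∈ T1`, `k = m * t^2`, `t ≠ 0` implies `k ∈ T1`. -/
lemma mul_sq_mem_T1 (hp : n.Prime) {T1 : Set (ZMod n)}
    (hT1 : T1 = {x : ZMod n | ∃ a : ZMod n, a ≠ 0 ∧ x = a ^ 2})
    {m t : ZMod n} (hm : m ∈ T1) (ht : t ≠ 0) : m * t ^ 2 ∈ T1 := by
  haveI : Fact (n.Prime) := ⟨hp⟩
  rw [hT1] at hm ⊢
  obtain ⟨a, ha, rfl⟩ := hm
  exact ⟨a * t, mul_ne_zero ha ht, by ring⟩

lemma mul_nonsq (hp : n.Prime) {T1 : Set (ZMod n)}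
    (hT1 : T1 = {x : ZMod n | ∃ a : ZMod n, a ≠ 0 ∧ x = a ^ 2})
    {m k : ZMod n} (hm : m ∈ T1) (hk0 : k ≠ 0) (hk : k ∉ T1) :
    m * k ≠ 0 ∧ m * k ∉ T1 := by
  haveI : Fact (n.Prime) := ⟨hp⟩
  have hm0 := T1_ne_zero hp hT1 hm
  refine ⟨mul_ne_zero hm0 hk0, fun hmem => hk ?_⟩
  rw [hT1] at hm hmem ⊢
  obtain ⟨a, ha, rfl⟩ := hm
  obtain ⟨b, hb, hab⟩ := hmem
  refine ⟨b * a⁻¹, mul_ne_zero hb (inv_ne_zero ha), ?_⟩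
  have : k = (a ^ 2)⁻¹ * (a ^ 2 * k) := by
    field_simp
  rw [this, hab]
  field_simp

/-- The key involution computation: for `m ∈ T1`, `k ∉ T1 ∪ {0}`,
`∑_{t ≠ 0} ee α (-(t*m) + -(t⁻¹*k)) = 0`. -/
lemma invol_sum (hp : n.Prime) {α : E} (h1 : α ^ n = 1) (h2 : (2 : E) = 0)
    {T1 : Set (ZMod n)} (hT1 : T1 = {x : ZMod n | ∃ a : ZMod n, a ≠ 0 ∧ x = a ^ 2})
    {m k : ZMod n} (hm : m ∈ T1) (hk0 : k ≠ 0) (hk : k ∉ T1) :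
    ∑ t ∈ Finset.univ.erase (0 : ZMod n), ee α (-(t * m) + -(t⁻¹ * k)) = 0 := by
  haveI : Fact (n.Prime) := ⟨hp⟩
  have hm0 : m ≠ 0 := T1_ne_zero hp hT1 hm
  refine Finset.sum_involution (fun t _ => k * m⁻¹ * t⁻¹) ?_ ?_ ?_ ?_
  · intro t ht
    have ht0 : t ≠ 0 := Finset.ne_of_mem_erase ht
    have harg : -(k * m⁻¹ * t⁻¹ * m) + -((k * m⁻¹ * t⁻¹)⁻¹ * k) = -(t * m) + -(t⁻¹ * k) := by
      field_simp
      ring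
    rw [harg]
    calc ee α (-(t * m) + -(t⁻¹ * k)) + ee α (-(t * m) + -(t⁻¹ * k))
        = 2 * ee α (-(t * m) + -(t⁻¹ * k)) := by ring
      _ = 0 := by rw [h2, zero_mul]
  · intro t ht _
    have ht0 : t ≠ 0 := Finset.ne_of_mem_erase ht
    intro heq
    -- t = k * m⁻¹ * t⁻¹  ⟹  k = m * t^2 ∈ T1, contradiction
    have : k = m * t ^ 2 := by
      have h' := congrArg (fun x => x * (m * t)) heq
      field_simp at h'
      linear_combination h'
    exact hk (this ▸ mul_sq_mem_T1 hp hT1 hm ht0)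
  · intro t ht
    have ht0 : t ≠ 0 := Finset.ne_of_mem_erase ht
    exact Finset.mem_erase.2 ⟨by
      exact mul_ne_zero (mul_ne_zero hk0 (inv_ne_zero hm0)) (inv_ne_zero ht0), Finset.mem_univ _⟩
  · intro t ht
    have ht0 : t ≠ 0 := Finset.ne_of_mem_erase ht
    field_simp

end dist

section maindist
variable {n : ℕ} [NeZero n] {E : Type*} [Field E]

/-- transform of the all-ones word -/
lemma cEval_ones (hp : n.Prime) (f : ZMod 2 →+* E) {α : E} (hα : IsPrimitiveRoot α n)
    (hn1 : ((n : ℕ) : E) = 1) (k : ZMod n) :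
    cEval f α (fun _ => (1 : ZMod 2)) k = if k = 0 then 1 else 0 := by
  rw [cEval_eq]
  simp only [map_one, one_mul]
  have : ∀ i : ZMod n, ee α (i * k) = ee α (k * i) := by intro i; rw [mul_comm]
  rw [Finset.sum_congr rfl (fun i _ => this i), sum_ee hp hα hn1]

/-- core: any nonzero word whose transform vanishes off T1 has weight² ≥ n -/
lemma key_dist (hp : n.Prime) (f : ZMod 2 →+* E) {α : E} (hα : IsPrimitiveRoot α n)
    (hodd : n % 2 = 1)
    {T1 : Set (ZMod n)} (hT1 : T1 = {x : ZMod n | ∃ a : ZMod n, a ≠ 0 ∧ x = a ^ 2})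
    (a : ZMod n → ZMod 2) (ha : a ≠ 0)
    (hvan : ∀ j, j ∉ T1 → cEval f α a j = 0) :
    n ≤ (hammingNorm a) ^ 2 := by
  classical
  haveI : Fact (n.Prime) := ⟨hp⟩
  have h1 : α ^ n = 1 := hα.pow_eq_one
  have h2 : (2 : E) = 0 := two_eq_zero f
  have hn1 : ((n : ℕ) : E) = 1 := n_one f hodd
  have hn2 : n ≠ 2 := by omega
  -- pick i0 in the support of a
  obtain ⟨i0, hi0⟩ : ∃ i, a i ≠ 0 := by
    by_contra h
    push_neg at h
    exact ha (funext fun i => h i)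
  have hi0' : a i0 = 1 := by
    rcases (by decide : ∀ y : ZMod 2, y = 0 ∨ y = 1) (a i0) with h | h
    · exact absurd h hi0
    · exact h
  -- shifted word
  set a' : ZMod n → ZMod 2 := fun i => a (i + i0) with ha'def
  have ha'0 : a' 0 = 1 := by simp [ha'def, hi0']
  have hvan' : ∀ j, j ∉ T1 → cEval f α a' j = 0 := by
    intro j hj
    have : cEval f α a' j = ee α (-(i0 * j)) * cEval f α a j := by
      rw [cEval_eq, cEval_eq, Finset.mul_sum]
      refine Finset.sum_bij' (fun i _ => i + i0) (fun t _ => t - i0) ?_ ?_ ?_ ?_ ?_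
      · intros; exact Finset.mem_univ _
      · intros; exact Finset.mem_univ _
      · intros; ring
      · intros; ring
      · intro i _
        simp only [ha'def]
        have hsplit : ee α (i * j) = ee α ((i + i0) * j) * ee α (-(i0 * j)) := by
          rw [← ee_add h1]; congr 1; ring
        rw [hsplit]; ring
    rw [this, hvan j hj, mul_zero]
  -- sum of all entries of a' is 0 (from the transform vanishing at 0)
  have hsum0 : ∑ i : ZMod n, a' i = 0 := by
    have h0 : cEval f α a' 0 = f (∑ i : ZMod n, a' i) := by
      rw [cEval_eq, map_sum]
      refine Finset.sum_congr rfl (fun i _ => ?_)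
      rw [mul_zero, ee_zero, mul_one]
    have := hvan' 0 (zero_not_T1 hp hT1)
    rw [h0] at this
    exact (f_zero_iff f _).1 this
  -- the inverted word v
  set ψ : ZMod n → ZMod n := fun t => -t⁻¹ with hψdef
  have hψ0 : ψ 0 = 0 := by simp [hψdef]
  have hψinv : Function.Involutive ψ := by
    intro t
    simp only [hψdef, inv_neg, neg_neg, inv_inv]
  set v : ZMod n → ZMod 2 := fun j => if j = 0 then 0 else a' (ψ j) with hvdef
  -- transform of v as a sum over nonzero t
  have hvtrans : ∀ k, cEval f α v k
      = ∑ t ∈ Finset.univ.erase (0 : ZMod n), f (a' t) * ee α (-(t⁻¹ * k)) := by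
    intro k
    rw [cEval_eq, ← Finset.add_sum_erase _ _ (Finset.mem_univ (0 : ZMod n))]
    have hv0 : v 0 = 0 := by simp [hvdef]
    rw [hv0, map_zero, zero_mul, zero_add]
    have hψne : ∀ j : ZMod n, j ≠ 0 → ψ j ≠ 0 := by
      intro j hj h0
      exact hj (by rw [← hψinv j, h0, hψ0])
    refine Finset.sum_bij' (fun j _ => ψ j) (fun t _ => ψ t) ?_ ?_ ?_ ?_ ?_
    · intro j hj
      exact Finset.mem_erase.2 ⟨hψne j (Finset.mem_erase.1 hj).1, Finset.mem_univ _⟩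
    · intro t ht
      exact Finset.mem_erase.2 ⟨hψne t (Finset.mem_erase.1 ht).1, Finset.mem_univ _⟩
    · intro j _; exact hψinv j
    · intro t _; exact hψinv t
    · intro j hj
      have hj0 : j ≠ 0 := (Finset.mem_erase.1 hj).1
      have hvj : v j = a' (ψ j) := by simp [hvdef, hj0]
      rw [hvj]
      congr 2
      simp only [hψdef, inv_neg, inv_inv, neg_mul, neg_neg]
  -- v is odd-like
  have hv0trans : cEval f α v 0 = 1 := by
    rw [hvtrans 0]
    have : ∀ t : ZMod n, f (a' t) * ee α (-(t⁻¹ * 0)) = f (a' t) := by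
      intro t; rw [mul_zero, neg_zero, ee_zero, mul_one]
    rw [Finset.sum_congr rfl (fun t _ => this t), ← map_sum]
    have hsum : ∑ t ∈ Finset.univ.erase (0 : ZMod n), a' t = 1 := by
      have := Finset.add_sum_erase Finset.univ a' (Finset.mem_univ (0 : ZMod n))
      rw [hsum0, ha'0] at this
      have h1' : (1 : ZMod 2) + ∑ t ∈ Finset.univ.erase (0 : ZMod n), a' t = 0 := this
      exact (by decide : ∀ y : ZMod 2, 1 + y = 0 → y = 1) _ h1'
    rw [hsum, map_one]
  -- v transform vanishes off T1 ∪ {0}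
  have hvvan : ∀ k, k ≠ 0 → k ∉ T1 → cEval f α v k = 0 := by
    intro k hk0 hk
    rw [hvtrans k]
    have hstep : ∀ t : ZMod n, f (a' t) * ee α (-(t⁻¹ * k))
        = ∑ m : ZMod n, cEval f α a' m * (ee α (-(t * m)) * ee α (-(t⁻¹ * k))) := by
      intro t
      rw [← inv_formula hp f hα hn1 a' t, Finset.sum_mul]
      refine Finset.sum_congr rfl (fun m _ => by ring)
    rw [Finset.sum_congr rfl (fun t _ => hstep t), Finset.sum_comm]
    refine Finset.sum_eq_zero (fun m _ => ?_)
    by_cases hm : m ∈ T1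
    · rw [← Finset.mul_sum]
      have : ∀ t : ZMod n, ee α (-(t * m)) * ee α (-(t⁻¹ * k)) = ee α (-(t * m) + -(t⁻¹ * k)) :=
        fun t => (ee_add h1 _ _).symm
      rw [Finset.sum_congr rfl (fun t _ => this t), invol_sum hp h1 h2 hT1 hm hk0 hk, mul_zero]
    · rw [← Finset.mul_sum, hvan' m hm, zero_mul]
  -- a nonsquare μ
  have hchar : ringChar (ZMod n) ≠ 2 := by
    rw [ZMod.ringChar_zmod_n]; exact hn2
  obtain ⟨μ, hμ⟩ := FiniteField.exists_nonsquare hchar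
  have hμT1 : μ ∉ T1 := by
    intro hmem
    rw [hT1] at hmem
    obtain ⟨b, hb, rfl⟩ := hmem
    exact hμ ⟨b, (sq b).symm ▸ rfl⟩
  have hμ0 : μ ≠ 0 := fun h => hμ (h ▸ ⟨0, (mul_zero 0).symm⟩)
  -- the dilated word w
  set w : ZMod n → ZMod 2 := fun i => v (μ⁻¹ * i) with hwdef
  have hwtrans : ∀ k, cEval f α w k = cEval f α v (μ * k) := by
    intro k
    rw [cEval_eq, cEval_eq]
    refine Finset.sum_bij' (fun i _ => μ⁻¹ * i) (fun t _ => μ * t) ?_ ?_ ?_ ?_ ?_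
    · intros; exact Finset.mem_univ _
    · intros; exact Finset.mem_univ _
    · intro i _; field_simp
    · intro t _; field_simp
    · intro i _
      simp only [hwdef]
      congr 2
      field_simp
  -- convolution u
  set u : ZMod n → ZMod 2 := fun k => ∑ i : ZMod n, v i * w (k - i) with hudef
  have hutrans : ∀ k, cEval f α u k = cEval f α v k * cEval f α w k := by
    intro k
    rw [cEval_eq, cEval_eq, cEval_eq, Finset.sum_mul_sum]
    have lhs : ∀ k' : ZMod n, f (u k') * ee α (k' * k)
        = ∑ i : ZMod n, f (v i) * (f (w (k' - i)) * ee α (k' * k)) := by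
      intro k'
      simp only [hudef, map_sum, Finset.sum_mul, map_mul]
      exact Finset.sum_congr rfl (fun i _ => by ring)
    rw [Finset.sum_congr rfl (fun k' _ => lhs k'), Finset.sum_comm]
    refine Finset.sum_congr rfl (fun i _ => ?_)
    refine Finset.sum_bij' (fun k' _ => k' - i) (fun l _ => l + i) ?_ ?_ ?_ ?_ ?_
    · intros; exact Finset.mem_univ _
    · intros; exact Finset.mem_univ _
    · intro k' _; ring
    · intro l _; ring
    · intro k' _
      have : ee α (k' * k) = ee α (i * k) * ee α ((k' - i) * k) := by
        rw [← ee_add h1]; congr 1; ring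
      rw [this]; ring
  -- u equals the all-ones vector
  have hueq : ∀ t, u t = 1 := by
    intro t
    have hsame : ∀ m, cEval f α u m = cEval f α (fun _ => (1 : ZMod 2)) m := by
      intro m
      rw [hutrans m, cEval_ones hp f hα hn1]
      by_cases hm0 : m = 0
      · subst hm0
        rw [if_pos rfl, hv0trans, hwtrans 0, mul_zero, hv0trans, one_mul]
      · rw [if_neg hm0]
        by_cases hm : m ∈ T1
        · rw [hwtrans m]
          have hmm := mul_nonsq hp hT1 hm hμ0 hμT1
          have : μ * m = m * μ := mul_comm _ _
          rw [hvvan (μ * m) (this ▸ hmm.1) (this ▸ hmm.2), mul_zero]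
        · rw [hvvan m hm0 hm, zero_mul]
    have hf : f (u t) = f 1 := by
      rw [← inv_formula hp f hα hn1 u t, ← inv_formula hp f hα hn1 (fun _ => (1 : ZMod 2)) t]
      exact Finset.sum_congr rfl (fun m _ => by rw [hsame m])
    exact f.injective hf
  -- existence of support pairs
  have hex : ∀ k : ZMod n, ∃ i, v i ≠ 0 ∧ w (k - i) ≠ 0 := by
    intro k
    by_contra hcon
    push_neg at hcon
    have : u k = 0 := by
      simp only [hudef]
      refine Finset.sum_eq_zero (fun i _ => ?_)
      by_cases hvi : v i = 0
      · rw [hvi, zero_mul]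
      · rw [hcon i hvi, mul_zero]
    rw [hueq k] at this
    exact one_ne_zero this
  -- support finsets
  set sa : Finset (ZMod n) := Finset.univ.filter (fun i => a i ≠ 0) with hsadef
  set sa' : Finset (ZMod n) := Finset.univ.filter (fun i => a' i ≠ 0) with hsa'def
  set sv : Finset (ZMod n) := Finset.univ.filter (fun i => v i ≠ 0) with hsvdef
  set sw : Finset (ZMod n) := Finset.univ.filter (fun i => w i ≠ 0) with hswdef
  have hcard : n ≤ sv.card * sw.card := by
    have hinj : Set.InjOn (fun k : ZMod n => ((hex k).choose, k - (hex k).choose))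
        ↑(Finset.univ : Finset (ZMod n)) := by
      intro k _ k' _ hkk
      have h1p := congrArg Prod.fst hkk
      have h2p := congrArg Prod.snd hkk
      simp only at h1p h2p
      rw [h1p] at h2p
      exact sub_left_injective h2p
    have hmaps : ∀ k ∈ (Finset.univ : Finset (ZMod n)),
        ((hex k).choose, k - (hex k).choose) ∈ sv ×ˢ sw := by
      intro k _
      obtain ⟨hv1, hw1⟩ := (hex k).choose_spec
      exact Finset.mem_product.2 ⟨Finset.mem_filter.2 ⟨Finset.mem_univ _, hv1⟩,
        Finset.mem_filter.2 ⟨Finset.mem_univ _, hw1⟩⟩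
    have := Finset.card_le_card_of_injOn _ hmaps hinj
    rwa [Finset.card_univ, ZMod.card, Finset.card_product] at this
  -- weights
  have hswsv : sw.card = sv.card := by
    have him : sw = sv.image (fun i => μ * i) := by
      ext i
      simp only [hswdef, hsvdef, Finset.mem_filter, Finset.mem_univ, true_and,
        Finset.mem_image, hwdef]
      constructor
      · intro h
        exact ⟨μ⁻¹ * i, ⟨h, by field_simp⟩⟩
      · rintro ⟨t, ht, rfl⟩
        have : μ⁻¹ * (μ * t) = t := by field_simp
        rw [this]
        exact ht
    rw [him, Finset.card_image_of_injective _ (mul_right_injective₀ hμ0)]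
  have hsa'sa : sa'.card = sa.card := by
    have him : sa' = sa.image (fun t => t - i0) := by
      ext i
      simp only [hsa'def, hsadef, Finset.mem_filter, Finset.mem_univ, true_and,
        Finset.mem_image, ha'def]
      constructor
      · intro h
        exact ⟨i + i0, ⟨h, by ring⟩⟩
      · rintro ⟨t, ht, rfl⟩
        have : t - i0 + i0 = t := by ring
        rw [this]
        exact ht
    rw [him, Finset.card_image_of_injective _ sub_left_injective]
  have hsvcard : sv.card = sa.card - 1 := by
    have him : sv = (sa'.image ψ).erase 0 := by
      ext j
      simp only [hsvdef, Finset.mem_filter, Finset.mem_univ, true_and, Finset.mem_erase,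
        Finset.mem_image, hvdef]
      constructor
      · intro h
        have hj0 : j ≠ 0 := by
          intro h0; rw [if_pos h0] at h; exact h rfl
        rw [if_neg hj0] at h
        exact ⟨hj0, ⟨ψ j, Finset.mem_filter.2 ⟨Finset.mem_univ _, h⟩, hψinv j⟩⟩
      · rintro ⟨hj0, ⟨t, ht, rfl⟩⟩
        rw [if_neg hj0, hψinv t]
        exact (Finset.mem_filter.1 ht).2
    have h0mem : (0 : ZMod n) ∈ sa'.image ψ := by
      refine Finset.mem_image.2 ⟨0, ?_, hψ0⟩
      refine Finset.mem_filter.2 ⟨Finset.mem_univ _, ?_⟩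
      rw [ha'0]; exact one_ne_zero
    rw [him, Finset.card_erase_of_mem h0mem,
      Finset.card_image_of_injective _ hψinv.injective, hsa'sa]
  -- conclude
  have hnorm : hammingNorm a = sa.card := rfl
  rw [hnorm, pow_two]
  calc n ≤ sv.card * sw.card := hcard
    _ = (sa.card - 1) * (sa.card - 1) := by rw [hswsv, hsvcard]
    _ ≤ sa.card * sa.card := Nat.mul_le_mul (Nat.sub_le _ _) (Nat.sub_le _ _)

end maindist

section dim
variable {n : ℕ} [NeZero n] {E : Type*} [Field E]

lemma card_T1 (hp : n.Prime) (hodd : n % 2 = 1)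
    {T1 : Set (ZMod n)} (hT1 : T1 = {x : ZMod n | ∃ a : ZMod n, a ≠ 0 ∧ x = a ^ 2})
    [DecidablePred (· ∈ T1)] :
    (Finset.univ.filter (· ∈ T1)).card = (n - 1) / 2 := by
  classical
  haveI : Fact (n.Prime) := ⟨hp⟩
  have hn3 : 3 ≤ n := by
    have := hp.two_le
    rcases Nat.lt_or_ge n 3 with h | h
    · interval_cases n <;> omega
    · exact h
  have h2ne : (2 : ZMod n) ≠ 0 := by
    have : ((2 : ℕ) : ZMod n) ≠ 0 := by
      rw [Ne, ZMod.natCast_eq_zero_iff]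
      intro hdvd
      have := Nat.le_of_dvd (by norm_num) hdvd
      omega
    simpa using this
  set S0 : Finset (ZMod n) := Finset.univ.erase 0 with hS0
  have himg : Finset.univ.filter (· ∈ T1) = S0.image (· ^ 2) := by
    ext x
    simp only [Finset.mem_filter, Finset.mem_univ, true_and, Finset.mem_image, hS0,
      Finset.mem_erase, hT1, Set.mem_setOf_eq]
    constructor
    · rintro ⟨a, ha, rfl⟩; exact ⟨a, ⟨ha, trivial⟩, rfl⟩
    · rintro ⟨a, ⟨ha, _⟩, rfl⟩; exact ⟨a, ha, rfl⟩
  have hfib : ∀ b ∈ S0.image (· ^ 2), (S0.filter (fun a => a ^ 2 = b)).card = 2 := by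
    intro b hb
    obtain ⟨a0, ha0S, rfl⟩ := Finset.mem_image.1 hb
    have ha0 : a0 ≠ 0 := (Finset.mem_erase.1 ha0S).1
    have hne : a0 ≠ -a0 := by
      intro h
      apply ha0
      have h2 : (2 : ZMod n) * a0 = 0 := by linear_combination h
      exact (mul_eq_zero.1 h2).resolve_left h2ne
    have : S0.filter (fun a => a ^ 2 = a0 ^ 2) = {a0, -a0} := by
      ext a
      simp only [Finset.mem_filter, hS0, Finset.mem_erase, Finset.mem_univ, true_and,
        Finset.mem_insert, Finset.mem_singleton, and_true]
      constructor
      · rintro ⟨ha, hsq⟩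
        have : (a - a0) * (a + a0) = 0 := by linear_combination hsq
        rcases mul_eq_zero.1 this with h | h
        · left; linear_combination h
        · right; linear_combination h
      · rintro (rfl | rfl)
        · exact ⟨ha0, rfl⟩
        · exact ⟨neg_ne_zero.2 ha0, by ring⟩
    rw [this, Finset.card_insert_of_notMem (by simpa using hne), Finset.card_singleton]
  have hsum := Finset.card_eq_sum_card_image (· ^ 2) S0
  rw [Finset.sum_congr rfl hfib, Finset.sum_const, smul_eq_mul] at hsum
  have hS0card : S0.card = n - 1 := by
    rw [hS0, Finset.card_erase_of_mem (Finset.mem_univ _), Finset.card_univ, ZMod.card]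
  rw [himg]
  omega

end dim

section polymap
open Polynomial
variable {n : ℕ} [NeZero n]

/-- the polynomial attached to a word -/
noncomputable def nu (c : ZMod n → ZMod 2) : Polynomial (ZMod 2) :=
  ∑ i : ZMod n, Polynomial.monomial i.val (c i)

/-- reduction of a polynomial to a word (exponents mod n) -/
noncomputable def rhoFun (P : Polynomial (ZMod 2)) : ZMod n → ZMod 2 :=
  fun i => P.sum fun m a => if (m : ZMod n) = i then a else 0

lemma rhoFun_zero : rhoFun (0 : Polynomial (ZMod 2)) = (0 : ZMod n → ZMod 2) := by
  funext i; simp [rhoFun]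

lemma rhoFun_add (P Q : Polynomial (ZMod 2)) :
    rhoFun (P + Q) = (rhoFun P + rhoFun Q : ZMod n → ZMod 2) := by
  funext i
  simp only [rhoFun, Pi.add_apply]
  rw [Polynomial.sum_add_index]
  · intro m; simp
  · intro m b1 b2; split_ifs <;> simp

/-- rho as an additive hom -/
noncomputable def rho : Polynomial (ZMod 2) →+ (ZMod n → ZMod 2) where
  toFun := rhoFun
  map_zero' := rhoFun_zero
  map_add' := rhoFun_add

lemma rho_monomial (m : ℕ) (a : ZMod 2) (i : ZMod n) :
    rho (Polynomial.monomial m a) i = if (m : ZMod n) = i then a else 0 := by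
  show rhoFun _ i = _
  rw [rhoFun, Polynomial.sum_monomial_index]
  simp

lemma rho_nu (c : ZMod n → ZMod 2) : rho (nu c) = c := by
  funext i
  rw [nu, map_sum]
  rw [Finset.sum_apply]
  have : ∀ i' : ZMod n, rho (Polynomial.monomial i'.val (c i')) i
      = if i' = i then c i' else 0 := by
    intro i'
    rw [rho_monomial]
    congr 1
    simp [ZMod.natCast_val, ZMod.cast_id]
  rw [Finset.sum_congr rfl (fun i' _ => this i')]
  rw [Finset.sum_ite_eq' Finset.univ i c]
  simp

lemma coeff_nu_lt (c : ZMod n → ZMod 2) {m : ℕ} (hm : m < n) :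
    (nu c).coeff m = c ((m : ZMod n)) := by
  rw [nu, Polynomial.finset_sum_coeff]
  rw [Finset.sum_congr rfl (fun i _ => Polynomial.coeff_monomial (n := i.val) (m := m))]
  rw [Finset.sum_eq_single ((m : ZMod n))]
  · rw [if_pos (ZMod.val_natCast_of_lt hm)]
  · intro i _ hne
    rw [if_neg]
    intro hval
    apply hne
    rw [← hval]
    simp [ZMod.natCast_val, ZMod.cast_id]
  · intro h; exact absurd (Finset.mem_univ _) h

lemma coeff_nu_ge (c : ZMod n → ZMod 2) {m : ℕ} (hm : n ≤ m) : (nu c).coeff m = 0 := by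
  rw [nu, Polynomial.finset_sum_coeff]
  refine Finset.sum_eq_zero (fun i _ => ?_)
  rw [Polynomial.coeff_monomial, if_neg]
  exact fun h => absurd (h ▸ ZMod.val_lt i) (by omega)

lemma degree_nu_lt (c : ZMod n → ZMod 2) : (nu c).degree < (n : ℕ) := by
  rw [Polynomial.degree_lt_iff_coeff_zero]
  intro m hm
  exact coeff_nu_ge c (by exact_mod_cast hm)

lemma rho_coeff (P : Polynomial (ZMod 2)) (hdeg : P.degree < (n : ℕ)) (i : ZMod n) :
    rho P i = P.coeff i.val := by
  show rhoFun P i = _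
  rw [rhoFun, Polynomial.sum_def]
  have hlt : ∀ m ∈ P.support, m < n := by
    intro m hm
    have := Polynomial.le_degree_of_ne_zero (Polynomial.mem_support_iff.1 hm)
    exact_mod_cast lt_of_le_of_lt this hdeg
  by_cases hmem : i.val ∈ P.support
  · rw [Finset.sum_eq_single i.val]
    · rw [if_pos]; simp [ZMod.natCast_val, ZMod.cast_id]
    · intro m hm hne
      rw [if_neg]
      intro hcast
      exact hne (by rw [← ZMod.val_natCast_of_lt (hlt m hm), hcast])
    · intro h; exact absurd hmem h
  · rw [Polynomial.notMem_support_iff.1 hmem]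
    refine Finset.sum_eq_zero (fun m hm => ?_)
    rw [if_neg]
    intro hcast
    exact hmem (by rwa [← ZMod.val_natCast_of_lt (hlt m hm), hcast] at hm)

lemma nu_rho (P : Polynomial (ZMod 2)) (hdeg : P.degree < (n : ℕ)) : nu (rho (n := n) P) = P := by
  ext m
  by_cases hm : m < n
  · rw [coeff_nu_lt _ hm, rho_coeff P hdeg, ZMod.val_natCast_of_lt hm]
  · rw [coeff_nu_ge _ (by omega)]
    exact (Polynomial.coeff_eq_zero_of_degree_lt
      (lt_of_lt_of_le hdeg (by exact_mod_cast Nat.le_of_not_lt hm))).symm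

end polymap

section ideal
open Polynomial
variable {n : ℕ} [NeZero n] {E : Type*} [Field E]

lemma eval_nu (f : ZMod 2 →+* E) {α : E} (h1 : α ^ n = 1) (c : ZMod n → ZMod 2) (j : ZMod n) :
    ((nu c).map f).eval (ee α j) = cEval f α c j := by
  rw [Polynomial.eval_map, nu, Polynomial.eval₂_finset_sum, cEval_eq]
  refine Finset.sum_congr rfl (fun i _ => ?_)
  rw [Polynomial.eval₂_monomial, ee_mul_pow h1]

lemma eval_Xn_sub_one (f : ZMod 2 →+* E) {α : E} (h1 : α ^ n = 1) (j : ZMod n) :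
    (((Polynomial.X : Polynomial (ZMod 2)) ^ n - 1).map f).eval (ee α j) = 0 := by
  simp only [Polynomial.map_sub, Polynomial.map_pow, Polynomial.map_X, Polynomial.map_one,
    Polynomial.eval_sub, Polynomial.eval_pow, Polynomial.eval_X, Polynomial.eval_one]
  rw [ee, ← pow_mul, mul_comm, pow_mul, h1, one_pow, sub_self]

lemma shift_mem {C1 : Submodule (ZMod 2) (ZMod n → ZMod 2)}
    (h1 : IsShiftClosed (C1 : Set (ZMod n → ZMod 2)))
    {c : ZMod n → ZMod 2} (hc : c ∈ C1) (t : ℕ) :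
    (fun i => c (i - (t : ZMod n))) ∈ C1 := by
  induction t with
  | zero => simpa using hc
  | succ t ih =>
    have := h1 _ ih
    have heq : (fun i => (fun i' => c (i' - (t : ZMod n))) (i - 1))
        = fun i => c (i - ((t + 1 : ℕ) : ZMod n)) := by
      funext i
      push_cast
      ring_nf
    rwa [heq] at this

lemma rho_X_mul (P : Polynomial (ZMod 2)) :
    rho (Polynomial.X * P) = fun i : ZMod n => rho P (i - 1) := by
  induction P using Polynomial.induction_on' with
  | add p q hp hq =>
    rw [mul_add, map_add, hp, hq]
    funext i
    simp [map_add]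
  | monomial m a =>
    rw [Polynomial.X_mul_monomial]
    funext i
    rw [rho_monomial, rho_monomial]
    congr 1
    push_cast
    rw [eq_iff_iff]
    constructor <;> intro h
    · rw [← h]; ring
    · rw [eq_sub_iff_add_eq] at h; rw [← h]

end ideal

section ideal2
open Polynomial
variable {n : ℕ} [NeZero n] {E : Type*} [Field E]

lemma rho_X_pow_mul (m : ℕ) (P : Polynomial (ZMod 2)) :
    rho (Polynomial.X ^ m * P) = fun i : ZMod n => rho P (i - ((m : ℕ) : ZMod n)) := by
  induction m with
  | zero => simp
  | succ m ih =>
    have : (Polynomial.X : Polynomial (ZMod 2)) ^ (m + 1) * P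
        = Polynomial.X * (Polynomial.X ^ m * P) := by ring
    rw [this, rho_X_mul, ih]
    funext i
    congr 1
    push_cast
    ring

lemma rho_mul_mem {C1 : Submodule (ZMod 2) (ZMod n → ZMod 2)}
    (h1 : IsShiftClosed (C1 : Set (ZMod n → ZMod 2)))
    (q P : Polynomial (ZMod 2)) (hP : rho (n := n) P ∈ C1) : rho (n := n) (q * P) ∈ C1 := by
  induction q using Polynomial.induction_on' with
  | add p q hp hq =>
    rw [add_mul, map_add]
    exact C1.add_mem hp hq
  | monomial m a =>
    rcases (by decide : ∀ y : ZMod 2, y = 0 ∨ y = 1) a with rfl | rfl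
    · simp only [Polynomial.monomial_zero_right, zero_mul, map_zero]
      exact C1.zero_mem
    · rw [← Polynomial.X_pow_eq_monomial, rho_X_pow_mul]
      exact shift_mem h1 hP m

/-- the ideal attached to the code -/
noncomputable def codeIdeal (C1 : Submodule (ZMod 2) (ZMod n → ZMod 2)) :
    Ideal (Polynomial (ZMod 2)) :=
  Ideal.span ((nu '' (C1 : Set (ZMod n → ZMod 2))) ∪ {Polynomial.X ^ n - 1})

lemma nu_mem_codeIdeal {C1 : Submodule (ZMod 2) (ZMod n → ZMod 2)}
    {c : ZMod n → ZMod 2} (hc : c ∈ C1) : nu c ∈ codeIdeal C1 :=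
  Ideal.subset_span (Or.inl ⟨c, hc, rfl⟩)

lemma Xn_sub_one_mem_codeIdeal (C1 : Submodule (ZMod 2) (ZMod n → ZMod 2)) :
    (Polynomial.X : Polynomial (ZMod 2)) ^ n - 1 ∈ codeIdeal C1 :=
  Ideal.subset_span (Or.inr rfl)

lemma rho_codeIdeal_mem {C1 : Submodule (ZMod 2) (ZMod n → ZMod 2)}
    (h1 : IsShiftClosed (C1 : Set (ZMod n → ZMod 2)))
    {P : Polynomial (ZMod 2)} (hP : P ∈ codeIdeal C1) : rho (n := n) P ∈ C1 := by
  refine Submodule.span_induction ?_ ?_ ?_ ?_ hP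
  · rintro x (⟨c, hc, rfl⟩ | hx)
    · rw [rho_nu]; exact hc
    · simp only [Set.mem_singleton_iff] at hx
      subst hx
      have h1n : (Polynomial.X : Polynomial (ZMod 2)) ^ n - 1
          = Polynomial.X ^ n * 1 - 1 := by ring
      have : rho (n := n) ((Polynomial.X : Polynomial (ZMod 2)) ^ n - 1)
          = (fun i : ZMod n => rho (n := n) (1 : Polynomial (ZMod 2)) (i - ((n : ℕ) : ZMod n)))
            - rho (n := n) 1 := by
        rw [← rho_X_pow_mul n (1 : Polynomial (ZMod 2))]
        rw [map_sub]
        congr 1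
        rw [mul_one]
      rw [this]
      have : (fun i : ZMod n => rho (n := n) (1 : Polynomial (ZMod 2)) (i - ((n : ℕ) : ZMod n)))
          = rho (n := n) 1 := by
        funext i
        congr 1
        simp [ZMod.natCast_self]
      rw [this, sub_self]
      exact C1.zero_mem
  · rw [map_zero]; exact C1.zero_mem
  · intro x y _ _ hx hy
    rw [map_add]; exact C1.add_mem hx hy
  · intro q x _ hx
    rw [smul_eq_mul]
    exact rho_mul_mem h1 q x hx

lemma eval_codeIdeal_zero (f : ZMod 2 →+* E) {α : E} (h1 : α ^ n = 1)
    {C1 : Submodule (ZMod 2) (ZMod n → ZMod 2)}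
    {T1 : Set (ZMod n)} (hn1 : nonzeroes f α (C1 : Set (ZMod n → ZMod 2)) = T1)
    {P : Polynomial (ZMod 2)} (hP : P ∈ codeIdeal C1) {j : ZMod n} (hj : j ∉ T1) :
    ((P.map f)).eval (ee α j) = 0 := by
  have hvan : ∀ c ∈ C1, cEval f α c j = 0 := by
    intro c hc
    by_contra h
    exact hj (hn1 ▸ ⟨c, hc, h⟩)
  refine Submodule.span_induction ?_ ?_ ?_ ?_ hP
  · rintro x (⟨c, hc, rfl⟩ | hx)
    · rw [eval_nu f h1]; exact hvan c hc
    · simp only [Set.mem_singleton_iff] at hx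
      subst hx
      exact eval_Xn_sub_one f h1 j
  · simp
  · intro x y _ _ hx hy
    rw [Polynomial.map_add, Polynomial.eval_add, hx, hy, add_zero]
  · intro q x _ hx
    rw [smul_eq_mul, Polynomial.map_mul, Polynomial.eval_mul, hx, mul_zero]

end ideal2

section dimmain
open Polynomial
variable {n : ℕ} [NeZero n] {E : Type*} [Field E]

lemma nu_add (c c' : ZMod n → ZMod 2) : nu (c + c') = nu c + nu c' := by
  rw [nu, nu, nu, ← Finset.sum_add_distrib]
  exact Finset.sum_congr rfl (fun i _ => by rw [Pi.add_apply, map_add])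

lemma nu_zero : nu (0 : ZMod n → ZMod 2) = 0 := by
  rw [nu]
  exact Finset.sum_eq_zero (fun i _ => by rw [Pi.zero_apply, map_zero])

theorem dim_part (hp : n.Prime) (hodd : n % 2 = 1) (f : ZMod 2 →+* E) {α : E}
    (hα : IsPrimitiveRoot α n)
    {T1 : Set (ZMod n)} (hT1 : T1 = {x : ZMod n | ∃ a : ZMod n, a ≠ 0 ∧ x = a ^ 2})
    (C1 : Submodule (ZMod 2) (ZMod n → ZMod 2))
    (h1 : IsShiftClosed (C1 : Set (ZMod n → ZMod 2)))
    (hn1 : nonzeroes f α (C1 : Set (ZMod n → ZMod 2)) = T1) :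
    Module.finrank (ZMod 2) ↥C1 = (n - 1) / 2 := by
  classical
  haveI : Fact (n.Prime) := ⟨hp⟩
  have h1α : α ^ n = 1 := hα.pow_eq_one
  have hn1E : ((n : ℕ) : E) = 1 := n_one f hodd
  have hn3 : 3 ≤ n := by
    have := hp.two_le
    rcases Nat.lt_or_ge n 3 with h | h
    · interval_cases n <;> omega
    · exact h
  set J := codeIdeal C1 with hJdef
  haveI hJp : J.IsPrincipal := IsPrincipalIdealRing.principal J
  set D := Submodule.IsPrincipal.generator J with hDdef
  have hmemJ : D ∈ J := Submodule.IsPrincipal.generator_mem J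
  have hdvd : ∀ P ∈ J, D ∣ P := fun P hP =>
    (Submodule.IsPrincipal.mem_iff_generator_dvd J).1 hP
  have hXn_monic : ((Polynomial.X : Polynomial (ZMod 2)) ^ n - 1).Monic := by
    have := Polynomial.monic_X_pow_sub_C (1 : ZMod 2) (NeZero.ne n)
    simpa using this
  have hXn_ne : ((Polynomial.X : Polynomial (ZMod 2)) ^ n - 1) ≠ 0 := hXn_monic.ne_zero
  have hDdvdXn : D ∣ (Polynomial.X : Polynomial (ZMod 2)) ^ n - 1 :=
    hdvd _ (Xn_sub_one_mem_codeIdeal C1)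
  have hDne : D ≠ 0 := by
    intro h
    rw [h] at hDdvdXn
    exact hXn_ne (zero_dvd_iff.1 hDdvdXn)
  have hDmonic : D.Monic := by
    have hlc := Polynomial.leadingCoeff_ne_zero.2 hDne
    rcases (by decide : ∀ y : ZMod 2, y = 0 ∨ y = 1) D.leadingCoeff with h | h
    · exact absurd h hlc
    · exact h
  -- over E
  have hmapXn : (((Polynomial.X : Polynomial (ZMod 2)) ^ n - 1).map f)
      = (Polynomial.X : Polynomial E) ^ n - 1 := by
    simp [Polynomial.map_sub, Polynomial.map_pow]
  have hXnE_ne : ((Polynomial.X : Polynomial E) ^ n - 1) ≠ 0 := by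
    have := Polynomial.monic_X_pow_sub_C (1 : E) (NeZero.ne n)
    simpa using this.ne_zero
  have hXnE_splits : Polynomial.Splits
      ((Polynomial.X : Polynomial E) ^ n - 1) := by
    rw [Polynomial.X_pow_sub_one_eq_prod (Nat.pos_of_ne_zero (NeZero.ne n)) hα]
    exact Polynomial.Splits.prod (fun ζ _ => Polynomial.Splits.X_sub_C _)
  have hsep : ((Polynomial.X : Polynomial E) ^ n - 1).Separable := by
    have := Polynomial.separable_X_pow_sub_C (1 : E) (by rw [hn1E]; exact one_ne_zero)
      one_ne_zero
    simpa using this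
  have hnodupXn : ((Polynomial.X : Polynomial E) ^ n - 1).roots.Nodup :=
    Polynomial.nodup_roots hsep
  have hDfdvd : D.map f ∣ (Polynomial.X : Polynomial E) ^ n - 1 := by
    rw [← hmapXn]
    exact Polynomial.map_dvd f hDdvdXn
  have hDfne : D.map f ≠ 0 := Polynomial.map_ne_zero hDne
  have hroots_le : (D.map f).roots ≤ ((Polynomial.X : Polynomial E) ^ n - 1).roots :=
    Polynomial.roots.le_of_dvd hXnE_ne hDfdvd
  have hDnodup : (D.map f).roots.Nodup := Multiset.nodup_of_le hroots_le hnodupXn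
  have hβinj : Function.Injective (fun j : ZMod n => ee α j) := by
    intro x y hxy
    have := hα.pow_inj (ZMod.val_lt x) (ZMod.val_lt y) hxy
    calc x = ((x.val : ℕ) : ZMod n) := by simp [ZMod.natCast_val, ZMod.cast_id]
      _ = ((y.val : ℕ) : ZMod n) := by rw [this]
      _ = y := by simp [ZMod.natCast_val, ZMod.cast_id]
  set Sfin : Finset (ZMod n) := Finset.univ.filter (fun j => j ∉ T1) with hSfin
  have hdegmap : (D.map f).natDegree = D.natDegree :=
    Polynomial.natDegree_map_eq_of_injective f.injective D
  -- lower bound on the degree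
  have hlow : Sfin.card ≤ D.natDegree := by
    have hsub : Sfin.image (fun j => ee α j) ⊆ (D.map f).roots.toFinset := by
      intro z hz
      obtain ⟨j, hj, rfl⟩ := Finset.mem_image.1 hz
      have hjT1 : j ∉ T1 := (Finset.mem_filter.1 hj).2
      rw [Multiset.mem_toFinset, Polynomial.mem_roots hDfne]
      exact eval_codeIdeal_zero f h1α hn1 hmemJ hjT1
    calc Sfin.card = (Sfin.image (fun j => ee α j)).card :=
          (Finset.card_image_of_injective _ hβinj).symm
      _ ≤ (D.map f).roots.toFinset.card := Finset.card_le_card hsub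
      _ ≤ Multiset.card (D.map f).roots := Multiset.toFinset_card_le _
      _ ≤ (D.map f).natDegree := Polynomial.card_roots' _
      _ = D.natDegree := hdegmap
  -- upper bound on the degree
  have hup : D.natDegree ≤ Sfin.card := by
    have hDsplits : Polynomial.Splits (D.map f) :=
      hXnE_splits.of_dvd hXnE_ne hDfdvd
    have hcount : (D.map f).natDegree = Multiset.card (D.map f).roots := by
      have := Polynomial.Splits.natDegree_eq_card_roots hDsplits
      exact this
    have hsub : (D.map f).roots.toFinset ⊆ Sfin.image (fun j => ee α j) := by
      intro z hz
      rw [Multiset.mem_toFinset] at hz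
      have hzXn : z ∈ ((Polynomial.X : Polynomial E) ^ n - 1).roots :=
        Multiset.mem_of_le hroots_le hz
      have hz1 : z ^ n = 1 := by
        have := (Polynomial.mem_roots hXnE_ne).1 hzXn
        have h0 : z ^ n - 1 = 0 := by simpa [Polynomial.IsRoot] using this
        linear_combination h0
      obtain ⟨i, hi, rfl⟩ := hα.eq_pow_of_pow_eq_one hz1
      refine Finset.mem_image.2 ⟨(i : ZMod n), ?_, ?_⟩
      · refine Finset.mem_filter.2 ⟨Finset.mem_univ _, ?_⟩
        intro hmem
        rw [← hn1] at hmem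
        obtain ⟨c, hc, hcne⟩ := hmem
        apply hcne
        rw [← eval_nu f h1α]
        have hroot : (D.map f).IsRoot (α ^ i) := (Polynomial.mem_roots hDfne).1 hz
        have : ee α ((i : ZMod n)) = α ^ i := by
          rw [ee, ZMod.val_natCast_of_lt hi]
        rw [this]
        exact Polynomial.IsRoot.dvd hroot (Polynomial.map_dvd f (hdvd _ (nu_mem_codeIdeal hc)))
      · rw [ee, ZMod.val_natCast_of_lt hi]
    calc D.natDegree = (D.map f).natDegree := hdegmap.symm
      _ = Multiset.card (D.map f).roots := hcount
      _ = (D.map f).roots.toFinset.card := (Multiset.toFinset_card_eq_card_iff_nodup.2 hDnodup).symm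
      _ ≤ (Sfin.image (fun j => ee α j)).card := Finset.card_le_card hsub
      _ = Sfin.card := Finset.card_image_of_injective _ hβinj
  have hSfincard : Sfin.card = n - (n - 1) / 2 := by
    have hcompl : Sfin = Finset.univ \ Finset.univ.filter (· ∈ T1) := by
      rw [← Finset.filter_not]
    rw [hcompl, Finset.card_sdiff_of_subset (Finset.filter_subset _ _), Finset.card_univ, ZMod.card,
      card_T1 hp hodd hT1]
  have hr : D.natDegree = n - (n - 1) / 2 := by omega
  set r := D.natDegree with hrdef
  have hrlt : r < n := by omega
  set N : Submodule (ZMod 2) (Polynomial (ZMod 2)) :=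
    Submodule.restrictScalars (ZMod 2) J ⊓ Polynomial.degreeLT (ZMod 2) n with hNdef
  have hmemN : ∀ P : Polynomial (ZMod 2), P ∈ N ↔ P ∈ J ∧ P.degree < (n : ℕ) := by
    intro P
    rw [hNdef, Submodule.mem_inf, Polynomial.mem_degreeLT]
    rfl
  have e1 : ↥C1 ≃ₗ[ZMod 2] ↥N :=
    { toFun := fun c => ⟨nu c.1, (hmemN _).2 ⟨nu_mem_codeIdeal c.2, degree_nu_lt c.1⟩⟩
      map_add' := fun c c' => by
        apply Subtype.ext
        exact nu_add c.1 c'.1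
      map_smul' := fun a c => by
        apply Subtype.ext
        rcases (by decide : ∀ y : ZMod 2, y = 0 ∨ y = 1) a with rfl | rfl
        · show nu ((0 : ZMod 2) • c.1) = (0 : ZMod 2) • nu c.1
          rw [zero_smul, zero_smul, nu_zero]
        · show nu ((1 : ZMod 2) • c.1) = (1 : ZMod 2) • nu c.1
          rw [one_smul, one_smul]
      invFun := fun P => ⟨rho P.1, rho_codeIdeal_mem h1 ((hmemN _).1 P.2).1⟩
      left_inv := fun c => by
        apply Subtype.ext
        exact rho_nu c.1
      right_inv := fun P => by
        apply Subtype.ext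
        exact nu_rho P.1 ((hmemN _).1 P.2).2 }
  have e2 : ↥(Polynomial.degreeLT (ZMod 2) (n - r)) ≃ₗ[ZMod 2] ↥N :=
    { toFun := fun m => ⟨D * m.1, (hmemN _).2 ⟨Ideal.mul_mem_right _ _ hmemJ, by
        rcases eq_or_ne m.1 0 with h0 | h0
        · rw [h0, mul_zero, Polynomial.degree_zero]
          exact WithBot.bot_lt_coe _
        · rw [mul_comm, hDmonic.degree_mul]
          have hm : m.1.degree < (n - r : ℕ) := Polynomial.mem_degreeLT.1 m.2
          rw [Polynomial.degree_eq_natDegree h0] at hm ⊢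
          rw [Polynomial.degree_eq_natDegree hDne]
          have hmn : m.1.natDegree < n - r := by exact_mod_cast hm
          have : (m.1.natDegree + r : ℕ) < n := by omega
          exact_mod_cast this⟩⟩
      map_add' := fun m m' => by
        apply Subtype.ext
        show D * (m.1 + m'.1) = D * m.1 + D * m'.1
        ring
      map_smul' := fun a m => by
        apply Subtype.ext
        show D * (a • m.1) = a • (D * m.1)
        rw [mul_smul_comm]
      invFun := fun P => ⟨P.1 /ₘ D, Polynomial.mem_degreeLT.2 (by
        rcases eq_or_ne (P.1 /ₘ D) 0 with h0 | h0
        · rw [h0, Polynomial.degree_zero]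
          exact WithBot.bot_lt_coe _
        · rw [Polynomial.degree_eq_natDegree h0]
          have hP1 : P.1.degree < (n : ℕ) := ((hmemN _).1 P.2).2
          have hP1n : P.1.natDegree < n := by
            rcases eq_or_ne P.1 0 with hz | hz
            · rw [hz, Polynomial.natDegree_zero]; omega
            · rw [Polynomial.degree_eq_natDegree hz] at hP1
              exact_mod_cast hP1
          rw [Polynomial.natDegree_divByMonic _ hDmonic]
          have : P.1.natDegree - r < n - r := by omega
          exact_mod_cast this)⟩
      left_inv := fun m => by
        apply Subtype.ext
        exact Polynomial.mul_divByMonic_cancel_left m.1 hDmonic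
      right_inv := fun P => by
        apply Subtype.ext
        obtain ⟨q, hq⟩ := hdvd P.1 ((hmemN _).1 P.2).1
        show D * (P.1 /ₘ D) = P.1
        rw [hq, Polynomial.mul_divByMonic_cancel_left q hDmonic] }
  have hfr1 : Module.finrank (ZMod 2) ↥C1 = Module.finrank (ZMod 2) ↥N :=
    e1.finrank_eq
  have hfr2 : Module.finrank (ZMod 2) ↥(Polynomial.degreeLT (ZMod 2) (n - r))
      = Module.finrank (ZMod 2) ↥N := e2.finrank_eq
  have hfr3 : Module.finrank (ZMod 2) ↥(Polynomial.degreeLT (ZMod 2) (n - r)) = n - r := by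
    rw [(Polynomial.degreeLTEquiv (ZMod 2) (n - r)).finrank_eq]
    exact Module.finrank_fin_fun (ZMod 2)
  rw [hfr1, ← hfr2, hfr3]
  omega

end dimmain

end Stmt19

/-- for prime `n ≡ ±1 (mod 8)`, the binary quadratic residue code
`C₁` with non-zero set the quadratic residues has dimension `(n-1)/2` and its
minimum distance satisfies the square-root bound `d(C₁)² ≥ n`. -/
theorem stmt19 {n : ℕ} [NeZero n] (hp : n.Prime) (h8 : n % 8 = 1 ∨ n % 8 = 7)
    {E : Type*} [Field E] (f : ZMod 2 →+* E) (α : E) (hα : IsPrimitiveRoot α n)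
    (T1 : Set (ZMod n))
    (hT1 : T1 = {x : ZMod n | ∃ a : ZMod n, a ≠ 0 ∧ x = a ^ 2})
    (C1 : Submodule (ZMod 2) (ZMod n → ZMod 2))
    (h1 : IsShiftClosed (C1 : Set (ZMod n → ZMod 2)))
    (hn1 : nonzeroes f α (C1 : Set (ZMod n → ZMod 2)) = T1) :
    Module.finrank (ZMod 2) ↥C1 = (n - 1) / 2 ∧
    n ≤ (minDist (C1 : Set (ZMod n → ZMod 2))) ^ 2 := by
  have hodd : n % 2 = 1 := by omega
  haveI : Fact (n.Prime) := ⟨hp⟩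
  constructor
  · exact Stmt19.dim_part hp hodd f hα hT1 C1 h1 hn1
  · -- C1 contains a nonzero codeword
    have h1T : (1 : ZMod n) ∈ T1 := Stmt19.one_mem_T1 hp hT1
    rw [← hn1] at h1T
    obtain ⟨c, hc, hcne⟩ := h1T
    have hcne0 : c ≠ 0 := by
      rintro rfl
      apply hcne
      simp [cEval]
    have hne : Set.Nonempty {d | ∃ c ∈ (C1 : Set (ZMod n → ZMod 2)), c ≠ 0 ∧ hammingNorm c = d} :=
      ⟨hammingNorm c, c, hc, hcne0, rfl⟩
    obtain ⟨c₀, hc₀, hc₀ne, hc₀norm⟩ := Nat.sInf_mem hne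
    show n ≤ (sInf {d | ∃ c ∈ (C1 : Set (ZMod n → ZMod 2)), c ≠ 0 ∧ hammingNorm c = d}) ^ 2
    rw [← hc₀norm]
    apply Stmt19.key_dist hp f hα hodd hT1 c₀ hc₀ne
    intro j hj
    by_contra h
    exact hj (hn1 ▸ ⟨c₀, hc₀, h⟩)
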